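/- arXiv:0812.2743 — 4 statements merged into one kernel-verified Lean document; each statement's English description precedes it below -/
import Mathlib

section
/- If A is an algebraic curvature tensor on a real inner product space (V,⟨·,·⟩) with Hermitian complex structure J satisfying both the Gray identity A(x,y,z,w)+A(Jx,Jy,Jz,Jw) = A(Jx,Jy,z,w)+A(x,y,Jz,Jw)+A(Jx,y,Jz,w)+A(x,Jy,z,Jw)+A(Jx,y,z,Jw)+A(x,Jy,Jz,w) and the W7 identity A(Jx,y,z,w)=A(x,y,Jz,w) for all x,y,z,w, then A = 0. -/
open scoped RealInnerProductSpace

/-- An algebraic curvature tensor on a real inner product space with a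
Hermitian complex structure `J` satisfying both the Gray identity and the `W₇` identity
vanishes. -/
theorem stmt_0 {V : Type*} [NormedAddCommGroup V] [InnerProductSpace ℝ V]
    (J : V →ₗ[ℝ] V) (hJ2 : ∀ x, J (J x) = -x)
    (hJinner : ∀ x y : V, ⟪J x, J y⟫ = ⟪x, y⟫)
    (A : V →ₗ[ℝ] V →ₗ[ℝ] V →ₗ[ℝ] V →ₗ[ℝ] ℝ)
    (hA1 : ∀ x y z w, A x y z w = -A y x z w)
    (hA2 : ∀ x y z w, A x y z w = A z w x y)
    (hBianchi : ∀ x y z w, A x y z w + A y z x w + A z x y w = 0)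
    (hGray : ∀ x y z w, A x y z w + A (J x) (J y) (J z) (J w) =
      A (J x) (J y) z w + A x y (J z) (J w) + A (J x) y (J z) w +
      A x (J y) z (J w) + A (J x) y z (J w) + A x (J y) (J z) w)
    (hW7 : ∀ x y z w, A (J x) y z w = A x y (J z) w) :
    ∀ x y z w, A x y z w = 0 := by
  -- J moves from slot 2 to slot 3
  have h23 : ∀ x y z w, A x (J y) z w = A x y (J z) w := by
    intro x y z w
    rw [hA1, hW7, ← hA1]
  -- J moves from slot 4 to slot 3
  have h34 : ∀ x y z w, A x y z (J w) = A x y (J z) w := by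
    intro x y z w
    rw [hA2, h23, hA2, hW7]
  -- A x y (J (J z)) w = - A x y z w
  have hneg : ∀ x y z w, A x y (J (J z)) w = -A x y z w := by
    intro x y z w
    rw [hJ2]
    simp [map_neg]
  -- all two-J terms equal -A
  have t13 : ∀ x y z w, A (J x) y (J z) w = -A x y z w := by
    intro x y z w; rw [hW7, hneg]
  have t12 : ∀ x y z w, A (J x) (J y) z w = -A x y z w := by
    intro x y z w; rw [hW7, h23, hneg]
  have t34 : ∀ x y z w, A x y (J z) (J w) = -A x y z w := by
    intro x y z w; rw [h34, hneg]
  have t24 : ∀ x y z w, A x (J y) z (J w) = -A x y z w := by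
    intro x y z w; rw [h23, t34]
  have t14 : ∀ x y z w, A (J x) y z (J w) = -A x y z w := by
    intro x y z w; rw [hW7, t34]
  have t23 : ∀ x y z w, A x (J y) (J z) w = -A x y z w := by
    intro x y z w; rw [h23, hneg]
  have t1234 : ∀ x y z w, A (J x) (J y) (J z) (J w) = A x y z w := by
    intro x y z w; rw [t12, t34]; ring
  intro x y z w
  have h := hGray x y z w
  rw [t1234, t12, t34, t13, t24, t14, t23] at h
  linarith
end

section
/- If A is an algebraic curvature tensor satisfying A(Jx,y,z,w) = A(x,y,Jz,w) for all x,y,z,w (the W7 condition), then A also satisfies A(Jx,y,z,w) = A(x,y,z,Jw), A(Jx,y,z,w) = A(x,Jy,z,w), and A(Jx,Jy,z,w) = -A(x,y,z,w) for all x,y,z,w. -/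
/-- An algebraic curvature tensor satisfying the `W₇` condition
`A(Jx,y,z,w) = A(x,y,Jz,w)` also satisfies the other `W₇`-type identities. -/
theorem stmt_1 {V : Type*} [AddCommGroup V] [Module ℝ V]
    (J : V →ₗ[ℝ] V) (hJ2 : ∀ x, J (J x) = -x)
    (A : V →ₗ[ℝ] V →ₗ[ℝ] V →ₗ[ℝ] V →ₗ[ℝ] ℝ)
    (hA1 : ∀ x y z w, A x y z w = -A y x z w)
    (hA2 : ∀ x y z w, A x y z w = A z w x y)
    (hBianchi : ∀ x y z w, A x y z w + A y z x w + A z x y w = 0)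
    (hW7 : ∀ x y z w, A (J x) y z w = A x y (J z) w) :
    (∀ x y z w, A (J x) y z w = A x y z (J w)) ∧
    (∀ x y z w, A (J x) y z w = A x (J y) z w) ∧
    (∀ x y z w, A (J x) (J y) z w = -A x y z w) := by
  have h14 : ∀ x y z w, A (J x) y z w = A x y z (J w) := by
    intro x y z w
    calc A (J x) y z w = A z w (J x) y := hA2 _ _ _ _
      _ = -A w z (J x) y := hA1 _ _ _ _
      _ = -A (J w) z x y := by rw [hW7]
      _ = A z (J w) x y := by rw [hA1 (J w) z x y, neg_neg]
      _ = A x y z (J w) := (hA2 _ _ _ _).symm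
  have h12 : ∀ x y z w, A (J x) y z w = A x (J y) z w := by
    intro x y z w
    have e1 := hBianchi (J x) y z w
    have e2 := hBianchi x (J y) z w
    have t1 : A y z (J x) w = A x w (J y) z := by
      calc A y z (J x) w = A (J x) w y z := hA2 _ _ _ _
        _ = A x w (J y) z := hW7 _ _ _ _
    have t2 : A z (J x) y w = -A (J x) z y w := hA1 _ _ _ _
    have t3 : A (J x) z y w = A x z (J y) w := hW7 _ _ _ _
    have t4 : A (J y) z x w = A y z (J x) w := hW7 _ _ _ _
    have t5 : A z x (J y) w = -A x z (J y) w := hA1 _ _ _ _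
    linarith
  refine ⟨h14, h12, ?_⟩
  intro x y z w
  have h := h12 x (J y) z w
  rw [hJ2] at h
  simpa using h
end

section
/- For any multilinear map Θ : V×V×V×V → ℝ symmetric in its first two arguments, symmetric in its last two arguments, and satisfying Θ(Jx,Jy,z,w) = Θ(x,y,z,w) for all x,y,z,w, the algebraic curvature tensor L(Θ)(x,y,z,w) := Θ(x,z,y,w)+Θ(y,w,x,z)-Θ(x,w,y,z)-Θ(y,z,x,w) satisfies the Gray identity: L(Θ)(x,y,z,w)+L(Θ)(Jx,Jy,Jz,Jw) = L(Θ)(Jx,Jy,z,w)+L(Θ)(x,y,Jz,Jw)+L(Θ)(Jx,y,Jz,w)+L(Θ)(x,Jy,z,Jw)+L(Θ)(Jx,y,z,Jw)+L(Θ)(x,Jy,Jz,w) for all x,y,z,w. -/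
/-- The linearization `L(Θ)` of a tensor `Θ` symmetric in its first two and in its
last two arguments. -/
def LTheta {V : Type*} [AddCommGroup V] [Module ℝ V]
    (Θ : V →ₗ[ℝ] V →ₗ[ℝ] V →ₗ[ℝ] V →ₗ[ℝ] ℝ) (x y z w : V) : ℝ :=
  Θ x z y w + Θ y w x z - Θ x w y z - Θ y z x w

/-- if `Θ` is in addition `J`-invariant in its first pair of arguments,
then `L(Θ)` satisfies the Gray identity. -/
theorem stmt_3 {V : Type*} [AddCommGroup V] [Module ℝ V]
    (J : V →ₗ[ℝ] V) (hJ2 : ∀ x, J (J x) = -x)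
    (Θ : V →ₗ[ℝ] V →ₗ[ℝ] V →ₗ[ℝ] V →ₗ[ℝ] ℝ)
    (hΘ1 : ∀ x y z w, Θ x y z w = Θ y x z w)
    (hΘ2 : ∀ x y z w, Θ x y z w = Θ x y w z)
    (hΘJ : ∀ x y z w, Θ (J x) (J y) z w = Θ x y z w) :
    ∀ x y z w, LTheta Θ x y z w + LTheta Θ (J x) (J y) (J z) (J w) =
      LTheta Θ (J x) (J y) z w + LTheta Θ x y (J z) (J w) + LTheta Θ (J x) y (J z) w +
      LTheta Θ x (J y) z (J w) + LTheta Θ (J x) y z (J w) + LTheta Θ x (J y) (J z) w := by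
  have hflip : ∀ a b c d : V, Θ (J a) b c d = -Θ a (J b) c d := by
    intro a b c d
    have := hΘJ a (J b) c d
    rw [hJ2] at this
    simp only [map_neg, LinearMap.neg_apply] at this
    linarith
  intro x y z w
  simp only [LTheta, hflip, hJ2, hΘJ, neg_neg, map_neg, LinearMap.neg_apply]
  ring
end

section
/- If A is an algebraic curvature tensor satisfying A(Jx,Jy,z,w) = A(x,y,z,w) for all x,y,z,w, then A satisfies the Gray identity. -/
/-- an algebraic curvature tensor with `A(Jx,Jy,z,w) = A(x,y,z,w)`
satisfies the Gray identity. -/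
theorem stmt_5 {V : Type*} [AddCommGroup V] [Module ℝ V]
    (J : V →ₗ[ℝ] V) (hJ2 : ∀ x, J (J x) = -x)
    (A : V →ₗ[ℝ] V →ₗ[ℝ] V →ₗ[ℝ] V →ₗ[ℝ] ℝ)
    (hA1 : ∀ x y z w, A x y z w = -A y x z w)
    (hA2 : ∀ x y z w, A x y z w = A z w x y)
    (hBianchi : ∀ x y z w, A x y z w + A y z x w + A z x y w = 0)
    (hJJ : ∀ x y z w, A (J x) (J y) z w = A x y z w) :
    ∀ x y z w, A x y z w + A (J x) (J y) (J z) (J w) =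
      A (J x) (J y) z w + A x y (J z) (J w) + A (J x) y (J z) w +
      A x (J y) z (J w) + A (J x) y z (J w) + A x (J y) (J z) w := by
  -- J-invariance in the last pair
  have hJJ' : ∀ x y z w, A x y (J z) (J w) = A x y z w := by
    intro x y z w
    rw [hA2, hJJ, ← hA2]
  -- moving J from first to second slot gives a sign
  have h1 : ∀ x y z w, A (J x) y z w = -A x (J y) z w := by
    intro x y z w
    have h := hJJ x (J y) z w
    rw [hJ2] at h
    simp only [map_neg, LinearMap.neg_apply] at h
    linarith
  intro x y z w
  have e1 : A (J x) (J y) (J z) (J w) = A x y z w := by rw [hJJ, hJJ']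
  have e2 : A (J x) (J y) z w = A x y z w := hJJ x y z w
  have e3 : A x y (J z) (J w) = A x y z w := hJJ' x y z w
  have e4 : A (J x) y (J z) w = -A x (J y) (J z) w := h1 x y (J z) w
  have e5 : A (J x) y z (J w) = -A x (J y) z (J w) := h1 x y z (J w)
  rw [e1, e2, e3, e4, e5]
  ring
end
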